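/- For every simple regular expression E over an alphabet α and every word w over α, the union of the languages of the iterated Antimirov partial derivatives of E with respect to w equals the left quotient of L(E) by w: ⋃_{F ∈ ∂_w(E)} L(F) = w⁻¹(L(E)). -/

import Mathlib

open scoped Classical

/-- The Antimirov partial derivative of a regular expression with respect to a symbol. -/
noncomputable def aderiv {α : Type*} (a : α) : RegularExpression α → Set (RegularExpression α)
  | .zero => ∅
  | .epsilon => ∅
  | .char b => if b = a then {1} else ∅
  | .plus E₁ E₂ => aderiv a E₁ ∪ aderiv a E₂
  | .comp E₁ E₂ =>
      if [] ∈ E₁.matches' then ((· * E₂) '' aderiv a E₁) ∪ aderiv a E₂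
      else (· * E₂) '' aderiv a E₁
  | .star E₁ => (· * E₁.star) '' aderiv a E₁

/-- Iterated Antimirov partial derivative with respect to a word. -/
noncomputable def aderivWord {α : Type*} : List α → RegularExpression α → Set (RegularExpression α)
  | [], E => {E}
  | a :: w, E => ⋃ F ∈ aderiv a E, aderivWord w F

/-- Left quotient of a language by a word. -/
def lquot {α : Type*} (w : List α) (L : Language α) : Language α := {v | w ++ v ∈ L}

lemma matches'_deriv {α : Type*} [DecidableEq α] (E : RegularExpression α) (a : α) (x : List α) :
    x ∈ (E.deriv a).matches' ↔ a :: x ∈ E.matches' := by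
  rw [← RegularExpression.rmatch_iff_matches', ← RegularExpression.rmatch_iff_matches']
  rfl

lemma matchEpsilon_iff {α : Type*} [DecidableEq α] (E : RegularExpression α) :
    E.matchEpsilon ↔ [] ∈ E.matches' := by
  rw [← RegularExpression.rmatch_iff_matches']
  rfl

lemma mem_bU {α : Type*} (S : Set (RegularExpression α)) (x : List α) :
    x ∈ ⋃ F ∈ S, F.matches' ↔ ∃ F ∈ S, x ∈ F.matches' := by
  exact Set.mem_iUnion₂.trans (by simp only [exists_prop]; exact Iff.rfl)

lemma bU_union {α : Type*} (s t : Set (RegularExpression α)) :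
    ⋃ F ∈ s ∪ t, F.matches' = (⋃ F ∈ s, F.matches') ∪ ⋃ F ∈ t, F.matches' := by
  exact Set.biUnion_union _ _ _

lemma bU_empty {α : Type*} : ⋃ F ∈ (∅ : Set (RegularExpression α)), F.matches' = ∅ := by
  exact Set.biUnion_empty _

lemma bU_singleton {α : Type*} (E : RegularExpression α) :
    ⋃ F ∈ ({E} : Set (RegularExpression α)), F.matches' = E.matches' := by
  exact Set.biUnion_singleton _ _

lemma biUnion_image_mul {α : Type*} (S : Set (RegularExpression α)) (Q : RegularExpression α) :
    ⋃ F ∈ (· * Q) '' S, F.matches'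
      = (show Language α from ⋃ F ∈ S, F.matches') * Q.matches' := by
  ext x
  rw [mem_bU]
  constructor
  · rintro ⟨_, ⟨F, hF, rfl⟩, hx⟩
    rw [show (F * Q).matches' = F.matches' * Q.matches' from rfl] at hx
    rcases (Language.mem_mul).1 hx with ⟨u, hu, v, hv, rfl⟩
    exact ⟨u, (mem_bU _ _).2 ⟨F, hF, hu⟩, v, hv, rfl⟩
  · rintro ⟨u, hu, v, hv, rfl⟩
    rcases (mem_bU _ _).1 hu with ⟨F, hF, huF⟩
    exact ⟨_, ⟨F, hF, rfl⟩, (Language.mem_mul).2 ⟨u, huF, v, hv, rfl⟩⟩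

lemma aderiv_lang {α : Type*} [DecidableEq α] (a : α) (E : RegularExpression α) :
    ⋃ F ∈ aderiv a E, F.matches' = (E.deriv a).matches' := by
  induction E with
  | zero => simp [aderiv]; exact bU_empty
  | epsilon => simp [aderiv]; exact bU_empty
  | char b =>
    by_cases h : b = a
    · subst h; simp [aderiv]; rw [if_pos rfl]; exact bU_singleton 1
    · simp [aderiv, h, RegularExpression.deriv_char_of_ne h]; rw [if_neg h]; exact bU_empty
  | plus P Q ihP ihQ =>
    simp only [aderiv, Set.biUnion_union, ihP, ihQ, RegularExpression.deriv_add]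
    rw [bU_union, ihP, ihQ]
    rfl
  | comp P Q ihP ihQ =>
    simp only [aderiv, RegularExpression.deriv]
    by_cases h : [] ∈ P.matches'
    · rw [if_pos h, if_pos ((matchEpsilon_iff P).2 h)]
      rw [bU_union, biUnion_image_mul, ihP, ihQ]
      rfl
    · rw [if_neg h, if_neg (fun hc => h ((matchEpsilon_iff P).1 hc))]
      rw [biUnion_image_mul, ihP]
      rfl
  | star P ihP =>
    simp only [aderiv, RegularExpression.deriv_star, biUnion_image_mul, ihP]
    rfl

lemma aderiv_lang' {α : Type*} (a : α) (E : RegularExpression α) :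
    ⋃ F ∈ aderiv a E, F.matches' = lquot [a] E.matches' := by
  ext v
  rw [aderiv_lang]
  exact matches'_deriv E a v

theorem antimirov_derivWord_lang {α : Type*} (w : List α) (E : RegularExpression α) :
    ⋃ F ∈ aderivWord w E, F.matches' = lquot w E.matches' := by
  induction w generalizing E with
  | nil => simp [aderivWord, lquot]; exact bU_singleton E
  | cons a w ih =>
    have : ⋃ F ∈ aderivWord (a :: w) E, F.matches'
        = ⋃ G ∈ aderiv a E, ⋃ F ∈ aderivWord w G, F.matches' := by
      simp only [aderivWord]
      ext v
      rw [mem_bU, Set.mem_iUnion₂]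
      simp only [mem_bU]
      simp only [Set.mem_iUnion, exists_prop]
      tauto
    rw [this]
    have h2 : ⋃ G ∈ aderiv a E, ⋃ F ∈ aderivWord w G, F.matches'
        = ⋃ G ∈ aderiv a E, lquot w G.matches' := by
      apply Set.iUnion₂_congr
      intro G _
      exact ih G
    rw [h2]
    ext v
    simp only [Set.mem_iUnion, lquot, Set.mem_setOf_eq]
    have := aderiv_lang' a E
    have hv : (w ++ v ∈ ⋃ F ∈ aderiv a E, F.matches') ↔ w ++ v ∈ lquot [a] E.matches' := by
      rw [this]
      exact Iff.rfl
    rw [mem_bU] at hv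
    simp only [Set.mem_iUnion, lquot, Set.mem_setOf_eq] at hv
    simp only [exists_prop]
    exact hv
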